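/- The number of orbits, under the simultaneous conjugation action of the symmetric group on 4 letters, of quadruples (σ1, σ2, σ3, σ4) of permutations of a 4-element set such that σ1 and σ2 are 4-cycles, σ3 and σ4 each have cycle type (3,1) (i.e., are 3-cycles fixing exactly one point), and σ1·σ2·σ3·σ4 = 1 is exactly 8. -/

import Mathlib

def P (l : List (Fin 4)) : Equiv.Perm (Fin 4) := l.formPerm

instance (σ : Equiv.Perm (Fin 4)) : Decidable σ.IsThreeCycle :=
  inferInstanceAs (Decidable (σ.cycleType = {3}))

def fourCycles : List (Equiv.Perm (Fin 4)) :=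
  [P [0, 1, 2, 3], P [0, 1, 3, 2], P [0, 2, 3, 1], P [0, 2, 1, 3],
   P [0, 3, 2, 1], P [0, 3, 1, 2]]

def threeCycles : List (Equiv.Perm (Fin 4)) :=
  [P [1, 2, 3], P [1, 3, 2], P [0, 1, 2], P [0, 1, 3], P [0, 2, 1],
   P [0, 2, 3], P [0, 3, 1], P [0, 3, 2]]

def reps : Fin 8 → Fin 4 → Equiv.Perm (Fin 4) :=
  ![![P [0, 1, 3, 2], P [0, 1, 3, 2], P [0, 2, 3], P [0, 2, 1]],
    ![P [0, 2, 1, 3], P [0, 2, 3, 1], P [1, 3, 2], P [0, 3, 1]],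
    ![P [0, 2, 3, 1], P [0, 3, 1, 2], P [0, 3, 2], P [1, 2, 3]],
    ![P [0, 3, 1, 2], P [0, 3, 1, 2], P [0, 3, 2], P [0, 1, 2]],
    ![P [0, 2, 1, 3], P [0, 3, 1, 2], P [0, 3, 2], P [0, 2, 3]],
    ![P [0, 3, 1, 2], P [0, 2, 1, 3], P [1, 2, 3], P [1, 3, 2]],
    ![P [0, 3, 1, 2], P [0, 3, 2, 1], P [0, 1, 3], P [0, 1, 3]],
    ![P [0, 2, 3, 1], P [0, 3, 2, 1], P [0, 3, 1], P [0, 2, 3]]]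

lemma mem_fourCycles : ∀ a : Equiv.Perm (Fin 4), a.cycleType = {4} → a ∈ fourCycles := by
  decide

lemma mem_threeCycles : ∀ a : Equiv.Perm (Fin 4), a.IsThreeCycle → a ∈ threeCycles := by
  decide

lemma reps_valid : ∀ i : Fin 8,
    (reps i 0).cycleType = {4} ∧ (reps i 1).cycleType = {4} ∧
    (reps i 2).IsThreeCycle ∧ (reps i 3).IsThreeCycle ∧
    reps i 0 * reps i 1 * reps i 2 * reps i 3 = 1 := by
  decide

set_option maxRecDepth 20000 in
set_option maxHeartbeats 4000000 in
lemma key : ∀ a ∈ fourCycles, ∀ b ∈ fourCycles, ∀ c ∈ threeCycles,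
    (a * b * c)⁻¹ ∈ threeCycles →
    ∃ i : Fin 8, ∃ ω : Equiv.Perm (Fin 4),
      a = ω * reps i 0 * ω⁻¹ ∧ b = ω * reps i 1 * ω⁻¹ ∧
      c = ω * reps i 2 * ω⁻¹ ∧ (a * b * c)⁻¹ = ω * reps i 3 * ω⁻¹ := by
  decide

set_option maxRecDepth 20000 in
set_option maxHeartbeats 4000000 in
lemma reps_distinct : ∀ i j : Fin 8,
    (∃ ω : Equiv.Perm (Fin 4), ∀ k : Fin 4, reps j k = ω * reps i k * ω⁻¹) → i = j := by
  decide

/-- There are exactly 8 simultaneous conjugacy classes of quadruples in `S_4`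
consisting of two 4-cycles and two permutations of cycle type (3,1), whose
product is the identity. -/
theorem count_orbits_deg4_two_four_cycles_two_three_cycles :
    Nat.card (Quot (fun (s t : {s : Fin 4 → Equiv.Perm (Fin 4) //
        (s 0).cycleType = {4} ∧ (s 1).cycleType = {4} ∧
        (s 2).IsThreeCycle ∧ (s 3).IsThreeCycle ∧
        s 0 * s 1 * s 2 * s 3 = 1}) =>
      ∃ ω : Equiv.Perm (Fin 4), ∀ i, t.val i = ω * s.val i * ω⁻¹)) = 8 := by
  set T := {s : Fin 4 → Equiv.Perm (Fin 4) //
        (s 0).cycleType = {4} ∧ (s 1).cycleType = {4} ∧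
        (s 2).IsThreeCycle ∧ (s 3).IsThreeCycle ∧
        s 0 * s 1 * s 2 * s 3 = 1} with hT
  set r : T → T → Prop := fun s t =>
      ∃ ω : Equiv.Perm (Fin 4), ∀ i, t.val i = ω * s.val i * ω⁻¹ with hr
  have req : Equivalence r := by
    constructor
    · intro s; exact ⟨1, fun i => by simp⟩
    · rintro s t ⟨ω, h⟩
      refine ⟨ω⁻¹, fun i => ?_⟩
      rw [h i]; group
    · rintro s t u ⟨ω1, h1⟩ ⟨ω2, h2⟩
      refine ⟨ω2 * ω1, fun i => ?_⟩
      rw [h2 i, h1 i]; group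
  have repT : ∀ i : Fin 8, reps i ∈ {s : Fin 4 → Equiv.Perm (Fin 4) |
      (s 0).cycleType = {4} ∧ (s 1).cycleType = {4} ∧
      (s 2).IsThreeCycle ∧ (s 3).IsThreeCycle ∧
      s 0 * s 1 * s 2 * s 3 = 1} := fun i => reps_valid i
  let f : Fin 8 → Quot r := fun i => Quot.mk r ⟨reps i, repT i⟩
  have hinj : Function.Injective f := by
    intro i j h
    have := (req.eqvGen_iff).mp ((Quot.eq).mp h)
    obtain ⟨ω, hω⟩ := this
    exact reps_distinct i j ⟨ω, hω⟩
  have hsurj : Function.Surjective f := by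
    intro q
    induction q using Quot.ind with
    | _ s =>
    obtain ⟨h0, h1, h2, h3, h4⟩ := s.2
    have hd : s.1 3 = (s.1 0 * s.1 1 * s.1 2)⁻¹ := eq_inv_of_mul_eq_one_right h4
    have h3' : (s.1 0 * s.1 1 * s.1 2)⁻¹ ∈ threeCycles :=
      mem_threeCycles _ (hd ▸ h3)
    obtain ⟨i, ω, e0, e1, e2, e3⟩ :=
      key _ (mem_fourCycles _ h0) _ (mem_fourCycles _ h1) _ (mem_threeCycles _ h2) h3'
    refine ⟨i, Quot.sound ⟨ω, fun k => ?_⟩⟩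
    fin_cases k
    exacts [e0, e1, e2, hd.trans e3]
  have : Nat.card (Fin 8) = Nat.card (Quot r) :=
    Nat.card_eq_of_bijective f ⟨hinj, hsurj⟩
  simpa using this.symm
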